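/- arXiv:1907.04720 — 6 statements merged into one kernel-verified Lean document; each statement's English description precedes it below -/
import Mathlib

section
/- For every x = (x₁,x₂,x₃) ∈ ℝ³, the Euclidean norm of Z(x) satisfies exp(x₃)/2 ≤ ‖Z(x)‖ ≤ √3·exp(x₃). In particular, for every ε > 0, if x₃ ≤ log ε then ‖Z(x)‖ < 2ε. -/
/-- Explicit vector in ℝ³ (with the Euclidean norm). -/
def vec3 (a b c : ℝ) : EuclideanSpace ℝ (Fin 3) := WithLp.toLp 2 ![a, b, c]

/-- The 4-periodic sawtooth: h(t) = t on [-1,1], h(t) = 2 - t on [1,3]. -/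
noncomputable def h (t : ℝ) : ℝ := 1 - |4 * Int.fract ((t + 1) / 4) - 2|

/-- The sign function ε(t) = (-1)^⌊(t+1)/2⌋. -/
noncomputable def eps (t : ℝ) : ℝ := (-1 : ℝ) ^ ⌊(t + 1) / 2⌋

/-- The Zorich-type map Z : ℝ³ → ℝ³. -/
noncomputable def Z (x : EuclideanSpace ℝ (Fin 3)) : EuclideanSpace ℝ (Fin 3) :=
  Real.exp (x 2) •
    vec3 (h (x 0)) (h (x 1)) (eps (x 0) * eps (x 1) * (1 - max |h (x 0)| |h (x 1)|))

/-- Rotation by π about the vertical line {(u,v,t) : t ∈ ℝ}. -/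
noncomputable def Rot (u v : ℝ) (x : EuclideanSpace ℝ (Fin 3)) : EuclideanSpace ℝ (Fin 3) :=
  vec3 (2 * u - x 0) (2 * v - x 1) (x 2)

lemma norm_vec3 (a b c : ℝ) : ‖vec3 a b c‖ = Real.sqrt (a^2 + b^2 + c^2) := by
  rw [EuclideanSpace.norm_eq]
  congr 1
  simp [vec3, Fin.sum_univ_three, sq_abs]

lemma abs_h_le (t : ℝ) : |h t| ≤ 1 := by
  have h1 := Int.fract_nonneg ((t + 1) / 4)
  have h2 := Int.fract_lt_one ((t + 1) / 4)
  rw [abs_le, h]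
  constructor <;> [skip; skip] <;>
  · rcases abs_cases (4 * Int.fract ((t + 1) / 4) - 2) with ⟨e, _⟩ | ⟨e, _⟩ <;> rw [e] <;> linarith

lemma eps_sq (t : ℝ) : eps t ^ 2 = 1 := by
  rw [eps, ← zpow_natCast ((-1:ℝ)^_), ← zpow_mul, mul_comm, zpow_mul]
  norm_num

set_option maxHeartbeats 1000000 in
/-- exp(x₃)/2 ≤ ‖Z(x)‖ ≤ √3·exp(x₃); in particular, for every ε > 0,
    if x₃ ≤ log ε then ‖Z(x)‖ < 2ε. -/
theorem zorich_norm_bounds (x : EuclideanSpace ℝ (Fin 3)) :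
    (Real.exp (x 2) / 2 ≤ ‖Z x‖ ∧ ‖Z x‖ ≤ Real.sqrt 3 * Real.exp (x 2)) ∧
      ∀ ε : ℝ, 0 < ε → x 2 ≤ Real.log ε → ‖Z x‖ < 2 * ε := by
  set a := h (x 0) with ha
  set b := h (x 1) with hb
  set m := max |a| |b| with hm
  set c := eps (x 0) * eps (x 1) * (1 - m) with hc
  have hZ : ‖Z x‖ = Real.exp (x 2) * Real.sqrt (a^2 + b^2 + c^2) := by
    rw [Z, norm_smul, norm_vec3, Real.norm_eq_abs, abs_of_pos (Real.exp_pos _)]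
  have hc2 : c^2 = (1 - m)^2 := by
    rw [hc, mul_pow, mul_pow, eps_sq, eps_sq]; ring
  have hma : m^2 ≤ a^2 + b^2 := by
    rcases max_cases |a| |b| with ⟨e, _⟩ | ⟨e, _⟩ <;> rw [hm, e, sq_abs] <;> nlinarith [sq_nonneg a, sq_nonneg b]
  have hm1 : m ≤ 1 := max_le (abs_h_le _) (abs_h_le _)
  have hm0 : 0 ≤ m := le_trans (abs_nonneg a) (le_max_left _ _)
  have hs_lo : (1/2 : ℝ) ≤ a^2 + b^2 + c^2 := by
    rw [hc2]; nlinarith [sq_nonneg (2*m - 1)]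
  have hs_hi : a^2 + b^2 + c^2 ≤ 3 := by
    have h1 : a^2 ≤ 1 := by nlinarith [abs_h_le (x 0), abs_nonneg a, sq_abs a]
    have h2 : b^2 ≤ 1 := by nlinarith [abs_h_le (x 1), abs_nonneg b, sq_abs b]
    rw [hc2]; nlinarith
  have hsq_lo : (1/2 : ℝ) ≤ Real.sqrt (a^2 + b^2 + c^2) := by
    rw [show (1/2 : ℝ) = Real.sqrt (1/4) by
      rw [show (1/4 : ℝ) = (1/2)^2 by norm_num, Real.sqrt_sq (by norm_num)]]
    exact Real.sqrt_le_sqrt (by linarith)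
  have hsq_hi : Real.sqrt (a^2 + b^2 + c^2) ≤ Real.sqrt 3 := Real.sqrt_le_sqrt hs_hi
  have hexp : (0:ℝ) < Real.exp (x 2) := Real.exp_pos _
  have hlo : Real.exp (x 2) / 2 ≤ ‖Z x‖ := by rw [hZ]; nlinarith
  have hhi : ‖Z x‖ ≤ Real.sqrt 3 * Real.exp (x 2) := by rw [hZ]; nlinarith
  refine ⟨⟨hlo, hhi⟩, fun ε hε hlog => ?_⟩
  have h1 : Real.exp (x 2) ≤ ε := by
    calc Real.exp (x 2) ≤ Real.exp (Real.log ε) := Real.exp_le_exp.2 hlog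
    _ = ε := Real.exp_log hε
  have h3 : Real.sqrt 3 < 2 := by
    rw [show (2:ℝ) = Real.sqrt 4 by rw [show (4:ℝ) = 2^2 by norm_num, Real.sqrt_sq (by norm_num)]]
    exact Real.sqrt_lt_sqrt (by norm_num) (by norm_num)
  calc ‖Z x‖ ≤ Real.sqrt 3 * Real.exp (x 2) := hhi
  _ ≤ Real.sqrt 3 * ε := by nlinarith [Real.sqrt_nonneg 3]
  _ < 2 * ε := by nlinarith
end

section
/- The range of Z is exactly ℝ³ \ {0}: Z(x) ≠ 0 for every x ∈ ℝ³, and every y ∈ ℝ³ with y ≠ 0 equals Z(x) for some x ∈ ℝ³. -/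
lemma h_id (a : ℝ) (h1 : -1 ≤ a) (h2 : a ≤ 1) : h a = a := by
  unfold h
  rw [Int.fract_eq_self.mpr ⟨by linarith, by linarith⟩, abs_of_nonpos (by linarith)]
  ring

lemma h_neg (a : ℝ) (h1 : -1 < a) (h2 : a < 1) : h (-a - 2) = a := by
  unfold h
  have hf : Int.fract ((-a - 2 + 1) / 4) = (3 - a) / 4 := by
    rw [Int.fract_eq_iff]
    exact ⟨by linarith, by linarith, ⟨-1, by push_cast; ring⟩⟩
  rw [hf, abs_of_nonneg (by linarith)]
  ring

lemma eps_one (a : ℝ) (h1 : -1 ≤ a) (h2 : a < 1) : eps a = 1 := by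
  unfold eps
  rw [show ⌊(a + 1) / 2⌋ = 0 from Int.floor_eq_iff.mpr ⟨by push_cast; linarith, by push_cast; linarith⟩]
  norm_num

lemma eps_negshift (a : ℝ) (h1 : -1 < a) (h2 : a < 1) : eps (-a - 2) = -1 := by
  unfold eps
  rw [show ⌊(-a - 2 + 1) / 2⌋ = -1 from Int.floor_eq_iff.mpr ⟨by push_cast; linarith, by push_cast; linarith⟩]
  norm_num

lemma eps_ne_zero (t : ℝ) : eps t ≠ 0 := zpow_ne_zero _ (by norm_num)

/-- The range of Z is exactly ℝ³ \ {0}: Z omits 0 and attains every other value. -/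
theorem zorich_range :
    (∀ x : EuclideanSpace ℝ (Fin 3), Z x ≠ 0) ∧
      ∀ y : EuclideanSpace ℝ (Fin 3), y ≠ 0 → ∃ x, Z x = y := by
  constructor
  · intro x hx
    have h0 := congrArg (fun v => v 0) hx
    have h1 := congrArg (fun v => v 1) hx
    have h2 := congrArg (fun v => v 2) hx
    simp [Z, vec3] at h0 h1 h2
    rcases h2 with (h | h) | h
    · exact eps_ne_zero _ h
    · exact eps_ne_zero _ h
    · rw [h0, h1] at h; simp at h
  · intro y hy
    set r : ℝ := max |y 0| |y 1| + |y 2| with hr_def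
    have hr : 0 < r := by
      rcases lt_or_eq_of_le (by positivity : (0:ℝ) ≤ r) with h | h
      · exact h
      · exfalso; apply hy
        have h0 : |y 0| = 0 ∧ |y 1| = 0 ∧ |y 2| = 0 := by
          constructor
          · have := le_max_left |y 0| |y 1|
            nlinarith [abs_nonneg (y 0), abs_nonneg (y 1), abs_nonneg (y 2)]
          constructor
          · have := le_max_right |y 0| |y 1|
            nlinarith [abs_nonneg (y 0), abs_nonneg (y 1), abs_nonneg (y 2)]
          · nlinarith [le_max_left |y 0| |y 1|, abs_nonneg (y 0), abs_nonneg (y 1), abs_nonneg (y 2)]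
        ext i
        fin_cases i
        · exact abs_eq_zero.mp h0.1
        · exact abs_eq_zero.mp h0.2.1
        · exact abs_eq_zero.mp h0.2.2
    set a : ℝ := y 0 / r with ha_def
    set b : ℝ := y 1 / r with hb_def
    have hra : r * a = y 0 := by rw [ha_def]; field_simp [hr.ne']
    have hrb : r * b = y 1 := by rw [hb_def]; field_simp [hr.ne']
    have hmax : max |a| |b| = (max |y 0| |y 1|) / r := by
      rw [ha_def, hb_def, abs_div, abs_div, abs_of_pos hr, max_div_div_right (le_of_lt hr) ]
    have ha1 : |a| ≤ 1 := by
      rw [ha_def, abs_div, abs_of_pos hr, div_le_one hr]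
      have := le_max_left |y 0| |y 1|
      nlinarith [abs_nonneg (y 2)]
    have hb1 : |b| ≤ 1 := by
      rw [hb_def, abs_div, abs_of_pos hr, div_le_one hr]
      have := le_max_right |y 0| |y 1|
      nlinarith [abs_nonneg (y 2)]
    have hkey : 1 - max |a| |b| = |y 2| / r := by
      rw [hmax]
      field_simp
      rw [hr_def]; ring
    have hexp : Real.exp (Real.log r) = r := Real.exp_log hr
    rcases le_or_gt 0 (y 2) with hy2 | hy2
    · -- upper case: x = (a, b, log r)
      refine ⟨vec3 a b (Real.log r), ?_⟩
      have e0 : (vec3 a b (Real.log r)) 0 = a := rfl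
      have e1 : (vec3 a b (Real.log r)) 1 = b := rfl
      have e2 : (vec3 a b (Real.log r)) 2 = Real.log r := rfl
      ext i
      have hha : h a = a := h_id a (abs_le.mp ha1).1 (abs_le.mp ha1).2
      have hhb : h b = b := h_id b (abs_le.mp hb1).1 (abs_le.mp hb1).2
      fin_cases i
      · show Real.exp ((vec3 a b (Real.log r)) 2) * h ((vec3 a b (Real.log r)) 0) = y 0
        rw [e0, e2, hexp, hha, hra]
      · show Real.exp ((vec3 a b (Real.log r)) 2) * h ((vec3 a b (Real.log r)) 1) = y 1
        rw [e1, e2, hexp, hhb, hrb]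
      · show Real.exp ((vec3 a b (Real.log r)) 2) *
            (eps ((vec3 a b (Real.log r)) 0) * eps ((vec3 a b (Real.log r)) 1) *
              (1 - max |h ((vec3 a b (Real.log r)) 0)| |h ((vec3 a b (Real.log r)) 1)|)) = y 2
        rw [e0, e1, e2, hexp, hha, hhb]
        rw [hkey, abs_of_nonneg hy2]
        rcases eq_or_lt_of_le hy2 with h2 | h2
        · rw [← h2]; simp
        · have hm : max |a| |b| < 1 := by
            have : 0 < |y 2| / r := div_pos (abs_pos.mpr (ne_of_gt h2)) hr
            linarith [hkey]
          rw [eps_one a (abs_le.mp ha1).1 (lt_of_le_of_lt (le_abs_self a) (lt_of_le_of_lt (le_max_left _ _) hm)),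
            eps_one b (abs_le.mp hb1).1 (lt_of_le_of_lt (le_abs_self b) (lt_of_le_of_lt (le_max_right _ _) hm))]
          field_simp
    · -- lower case: x = (-a-2, b, log r)
      have hm : max |a| |b| < 1 := by
        have : 0 < |y 2| / r := div_pos (abs_pos.mpr (ne_of_lt hy2)) hr
        linarith [hkey]
      have haa : -1 < a ∧ a < 1 :=
        ⟨by nlinarith [neg_abs_le a, le_max_left |a| |b|], by nlinarith [le_abs_self a, le_max_left |a| |b|]⟩
      have hbb : -1 < b ∧ b < 1 :=
        ⟨by nlinarith [neg_abs_le b, le_max_right |a| |b|], by nlinarith [le_abs_self b, le_max_right |a| |b|]⟩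
      refine ⟨vec3 (-a - 2) b (Real.log r), ?_⟩
      have e0 : (vec3 (-a - 2) b (Real.log r)) 0 = -a - 2 := rfl
      have e1 : (vec3 (-a - 2) b (Real.log r)) 1 = b := rfl
      have e2 : (vec3 (-a - 2) b (Real.log r)) 2 = Real.log r := rfl
      ext i
      have hha : h (-a - 2) = a := h_neg a haa.1 haa.2
      have hhb : h b = b := h_id b (abs_le.mp hb1).1 (abs_le.mp hb1).2
      fin_cases i
      · show Real.exp ((vec3 (-a-2) b (Real.log r)) 2) * h ((vec3 (-a-2) b (Real.log r)) 0) = y 0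
        rw [e0, e2, hexp, hha, hra]
      · show Real.exp ((vec3 (-a-2) b (Real.log r)) 2) * h ((vec3 (-a-2) b (Real.log r)) 1) = y 1
        rw [e1, e2, hexp, hhb, hrb]
      · show Real.exp ((vec3 (-a-2) b (Real.log r)) 2) *
            (eps ((vec3 (-a-2) b (Real.log r)) 0) * eps ((vec3 (-a-2) b (Real.log r)) 1) *
              (1 - max |h ((vec3 (-a-2) b (Real.log r)) 0)| |h ((vec3 (-a-2) b (Real.log r)) 1)|)) = y 2
        rw [e0, e1, e2, hexp, hha, hhb, hkey, abs_of_neg hy2,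
          eps_negshift a haa.1 haa.2, eps_one b hbb.1.le hbb.2]
        field_simp
end

section
/- The image of the closed beam [-1,1] × [-1,1] × ℝ under Z is exactly the closed upper half-space minus the origin: Z([-1,1]² × ℝ) = {(y₁,y₂,y₃) ∈ ℝ³ : y₃ ≥ 0} \ {0}. -/
lemma h_Icc {t : ℝ} (h1 : -1 ≤ t) (h2 : t ≤ 1) : h t = t := by
  unfold h
  rw [Int.fract_eq_self.2 ⟨by linarith, by linarith⟩]
  rw [show 4 * ((t + 1) / 4) - 2 = t - 1 by ring, abs_of_nonpos (by linarith)]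
  ring

lemma eps_Ico {t : ℝ} (h1 : -1 ≤ t) (h2 : t < 1) : eps t = 1 := by
  unfold eps
  rw [show ⌊(t + 1) / 2⌋ = 0 from Int.floor_eq_zero_iff.2 ⟨by linarith, by linarith⟩]
  norm_num

lemma Z0 (x : EuclideanSpace ℝ (Fin 3)) : Z x 0 = Real.exp (x 2) * h (x 0) := rfl
lemma Z1 (x : EuclideanSpace ℝ (Fin 3)) : Z x 1 = Real.exp (x 2) * h (x 1) := rfl
lemma Z2 (x : EuclideanSpace ℝ (Fin 3)) :
    Z x 2 = Real.exp (x 2) * (eps (x 0) * eps (x 1) * (1 - max |h (x 0)| |h (x 1)|)) := rfl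

/-- The image of the closed beam [-1,1]² × ℝ under Z is exactly the closed
    upper half-space minus the origin. -/
theorem zorich_image_beam :
    Z '' {x : EuclideanSpace ℝ (Fin 3) |
        x 0 ∈ Set.Icc (-1 : ℝ) 1 ∧ x 1 ∈ Set.Icc (-1 : ℝ) 1} =
      {y : EuclideanSpace ℝ (Fin 3) | 0 ≤ y 2} \ {0} := by
  ext y
  simp only [Set.mem_image, Set.mem_setOf_eq, Set.mem_diff, Set.mem_singleton_iff,
    Set.mem_Icc]
  constructor
  · rintro ⟨x, ⟨⟨ha1, ha2⟩, ⟨hb1, hb2⟩⟩, rfl⟩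
    have hha : h (x 0) = x 0 := h_Icc ha1 ha2
    have hhb : h (x 1) = x 1 := h_Icc hb1 hb2
    have hmax : max |x 0| |x 1| ≤ 1 := max_le (abs_le.2 ⟨ha1, ha2⟩) (abs_le.2 ⟨hb1, hb2⟩)
    have hexp := Real.exp_pos (x 2)
    constructor
    · rw [Z2, hha, hhb]
      rcases eq_or_lt_of_le hmax with hm | hm
      · rw [← hm]; simp
      · have h0 : x 0 < 1 := lt_of_le_of_lt (le_abs_self _) (lt_of_le_of_lt (le_max_left _ _) hm)
        have h1 : x 1 < 1 := lt_of_le_of_lt (le_abs_self _) (lt_of_le_of_lt (le_max_right _ _) hm)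
        rw [eps_Ico ha1 h0, eps_Ico hb1 h1]
        nlinarith
    · intro hzero
      have e0 : Z x 0 = 0 := by rw [hzero]; rfl
      have e1 : Z x 1 = 0 := by rw [hzero]; rfl
      have e2 : Z x 2 = 0 := by rw [hzero]; rfl
      rw [Z0, hha] at e0
      rw [Z1, hhb] at e1
      have hx0 : x 0 = 0 := by
        rcases mul_eq_zero.1 e0 with hh | hh
        · exact absurd hh hexp.ne'
        · exact hh
      have hx1 : x 1 = 0 := by
        rcases mul_eq_zero.1 e1 with hh | hh
        · exact absurd hh hexp.ne'
        · exact hh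
      rw [Z2, hha, hhb, hx0, hx1] at e2
      have he : eps (0:ℝ) = 1 := eps_Ico (by norm_num) (by norm_num)
      rw [he] at e2
      simp at e2
  · rintro ⟨hy2, hy0⟩
    set s : ℝ := max |y 0| |y 1| + y 2 with hs
    have hmaxnn : 0 ≤ max |y 0| |y 1| := le_max_of_le_left (abs_nonneg _)
    have hspos : 0 < s := by
      rcases lt_or_eq_of_le (by positivity : (0:ℝ) ≤ s) with h' | h'
      · exact h'
      exfalso
      have hm0 : max |y 0| |y 1| = 0 := by
        have habs : |y 0| ⊔ |y 1| + y 2 = 0 := h'.symm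
        linarith
      have hy20 : y 2 = 0 := by
        have habs : |y 0| ⊔ |y 1| + y 2 = 0 := h'.symm
        linarith
      have h00 : y 0 = 0 := by
        have h1 := le_max_left |y 0| |y 1|
        have : |y 0| = 0 := le_antisymm (hm0 ▸ h1) (abs_nonneg _)
        exact abs_eq_zero.1 this
      have h11 : y 1 = 0 := by
        have h1 := le_max_right |y 0| |y 1|
        have : |y 1| = 0 := le_antisymm (hm0 ▸ h1) (abs_nonneg _)
        exact abs_eq_zero.1 this
      apply hy0
      ext i
      fin_cases i <;> simp [h00, h11, hy20] <;> rfl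
    have hy0s : |y 0| ≤ s := by
      have := le_max_left |y 0| |y 1|; linarith
    have hy1s : |y 1| ≤ s := by
      have := le_max_right |y 0| |y 1|; linarith
    have hA1 : -1 ≤ y 0 / s := by
      rw [le_div_iff₀ hspos]
      have := (abs_le.1 hy0s).1; linarith
    have hA2 : y 0 / s ≤ 1 := by
      rw [div_le_one hspos]
      exact le_trans (le_abs_self _) hy0s
    have hB1 : -1 ≤ y 1 / s := by
      rw [le_div_iff₀ hspos]
      have := (abs_le.1 hy1s).1; linarith
    have hB2 : y 1 / s ≤ 1 := by
      rw [div_le_one hspos]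
      exact le_trans (le_abs_self _) hy1s
    refine ⟨vec3 (y 0 / s) (y 1 / s) (Real.log s), ⟨⟨hA1, hA2⟩, hB1, hB2⟩, ?_⟩
    have hmaxdiv : max |y 0 / s| |y 1 / s| = max |y 0| |y 1| / s := by
      rw [abs_div, abs_div, abs_of_pos hspos, max_div_div_right hspos.le]
    ext i
    fin_cases i
    · show Real.exp (Real.log s) * h (y 0 / s) = y 0
      rw [Real.exp_log hspos, h_Icc hA1 hA2]
      field_simp
    · show Real.exp (Real.log s) * h (y 1 / s) = y 1
      rw [Real.exp_log hspos, h_Icc hB1 hB2]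
      field_simp
    · show Real.exp (Real.log s) *
        (eps (y 0 / s) * eps (y 1 / s) * (1 - max |h (y 0 / s)| |h (y 1 / s)|)) = y 2
      rw [Real.exp_log hspos, h_Icc hA1 hA2, h_Icc hB1 hB2, hmaxdiv]
      have hone : 1 - max |y 0| |y 1| / s = y 2 / s := by
        field_simp
        linarith
      rw [hone]
      rcases eq_or_lt_of_le hy2 with hz | hz
      · rw [← hz]; simp
      · have hmlt : max |y 0| |y 1| < s := by linarith
        have h0lt : y 0 / s < 1 := by
          rw [div_lt_one hspos]
          exact lt_of_le_of_lt (le_trans (le_abs_self _) (le_max_left _ _)) hmlt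
        have h1lt : y 1 / s < 1 := by
          rw [div_lt_one hspos]
          exact lt_of_le_of_lt (le_trans (le_abs_self _) (le_max_right _ _)) hmlt
        rw [eps_Ico hA1 h0lt, eps_Ico hB1 h1lt]
        field_simp
end

section
/- Characterization of the fibers of Z: for all a, b ∈ ℝ³, Z(a) = Z(b) if and only if there exist n, m ∈ ℤ and p ∈ {0,1} such that a = R_{(1,1)}^p(b) + (4n, 4m, 0), where R_{(1,1)}^0 is the identity and R_{(1,1)}^1 = R_{(1,1)}. -/
lemma eps_eq (t : ℝ) : eps t = 1 ∨ eps t = -1 := by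
  unfold eps
  rcases Int.even_or_odd ⌊(t + 1) / 2⌋ with he | ho
  · left; exact he.neg_one_zpow
  · right; exact ho.neg_one_zpow

lemma abs_eps (t : ℝ) : |eps t| = 1 := by
  rcases eps_eq t with he | he <;> rw [he] <;> norm_num

lemma h_add_int (t : ℝ) (k : ℤ) : h (t + 4 * k) = h t := by
  unfold h
  have : (t + 4 * k + 1) / 4 = (t + 1) / 4 + k := by ring
  rw [this, Int.fract_add_intCast]

lemma h_two_sub (t : ℝ) : h (2 - t) = h t := by
  unfold h
  have e : (2 - t + 1) / 4 = -((t + 1) / 4) + 1 := by ring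
  rw [e, Int.fract_add_one]
  by_cases hz : Int.fract ((t + 1) / 4) = 0
  · rw [Int.fract_neg_eq_zero.mpr hz, hz]
  · rw [Int.fract_neg hz]
    congr 1
    rw [abs_sub_comm]
    congr 1
    ring

lemma eps_add_int (t : ℝ) (k : ℤ) : eps (t + 4 * k) = eps t := by
  unfold eps
  have e : (t + 4 * k + 1) / 2 = (t + 1) / 2 + (2 * k : ℤ) := by push_cast; ring
  rw [e, Int.floor_add_intCast, zpow_add₀ (by norm_num : (-1:ℝ) ≠ 0)]
  have : ((-1 : ℝ)) ^ (2 * k : ℤ) = 1 := by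
    rw [zpow_mul]; norm_num
  rw [this, mul_one]

lemma fract_def' (x : ℝ) : Int.fract x = x - ⌊x⌋ := rfl

lemma h_fiber {s t : ℝ} (hst : h s = h t) :
    (∃ k : ℤ, s = t + 4 * k) ∨ (∃ k : ℤ, s = 2 - t + 4 * k) := by
  unfold h at hst
  set x := (s + 1) / 4 with hx
  set y := (t + 1) / 4 with hy
  have habs : |4 * Int.fract x - 2| = |4 * Int.fract y - 2| := by linarith
  have fx0 := Int.fract_nonneg x
  have fx1 := Int.fract_lt_one x
  have fy0 := Int.fract_nonneg y
  have fy1 := Int.fract_lt_one y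
  have hxf := fract_def' x
  have hyf := fract_def' y
  rcases abs_eq_abs.mp habs with he | he
  · left
    have hf : Int.fract x = Int.fract y := by linarith
    obtain ⟨z, hz⟩ := Int.fract_eq_fract.mp hf
    refine ⟨z, ?_⟩
    have : x - y = z := hz
    rw [hx, hy] at this
    linarith
  · right
    refine ⟨⌊x⌋ + ⌊y⌋, ?_⟩
    have hsum : Int.fract x + Int.fract y = 1 := by linarith
    push_cast
    have : x + y = (⌊x⌋ : ℝ) + ⌊y⌋ + 1 := by linarith
    rw [hx, hy] at this
    linarith

lemma abs_h_one {t : ℝ} (ht : |h t| = 1) : ∃ k : ℤ, t = 2 * k - 1 := by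
  unfold h at ht
  set x := (t + 1) / 4 with hx
  have fx0 := Int.fract_nonneg x
  have fx1 := Int.fract_lt_one x
  have hxf := fract_def' x
  have hu : |4 * Int.fract x - 2| ≤ 2 := by
    rcases abs_cases (4 * Int.fract x - 2) with ⟨he, _⟩ | ⟨he, _⟩ <;> rw [he] <;> linarith
  have hu0 := abs_nonneg (4 * Int.fract x - 2)
  rcases abs_eq_abs.mp (ht.trans (abs_one).symm) with h1 | h1
  · have : 4 * Int.fract x - 2 = 0 :=
      abs_eq_zero.mp (by linarith : |4 * Int.fract x - 2| = 0)
    refine ⟨2 * ⌊x⌋ + 1, ?_⟩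
    have hxv : x = ⌊x⌋ + 1/2 := by linarith
    rw [hx] at hxv
    push_cast
    linarith
  · have h2 : |4 * Int.fract x - 2| = 2 := by linarith
    have : 4 * Int.fract x - 2 = -2 := by
      rcases abs_eq (by norm_num : (0:ℝ) ≤ 2) |>.mp h2 with h3 | h3
      · linarith
      · exact h3
    refine ⟨2 * ⌊x⌋, ?_⟩
    have hxv : x = (⌊x⌋ : ℝ) := by linarith
    rw [hx] at hxv
    push_cast
    linarith

lemma abs_h_one_of_odd (k : ℤ) : |h (2 * k - 1)| = 1 := by
  unfold h
  have e : ((2 * (k:ℝ) - 1) + 1) / 4 = (k : ℝ) / 2 := by ring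
  rw [e]
  rcases Int.even_or_odd k with ⟨j, hj⟩ | ⟨j, hj⟩
  · have : (k : ℝ) / 2 = (j : ℤ) := by rw [hj]; push_cast; ring
    rw [this, Int.fract_intCast]
    norm_num
  · have : (k : ℝ) / 2 = (j : ℤ) + 1/2 := by rw [hj]; push_cast; ring
    rw [this, add_comm, Int.fract_add_intCast]
    rw [Int.fract_eq_self.mpr (by norm_num)]
    norm_num

lemma eps_two_sub {t : ℝ} (ht : ∀ k : ℤ, t ≠ 2 * k - 1) : eps (2 - t) = -eps t := by
  unfold eps
  set x := (t + 1) / 2 with hx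
  have hnint : ∀ n : ℤ, x ≠ n := by
    intro n hn
    exact ht n (by rw [hx] at hn; linarith)
  have hflt : (⌊x⌋ : ℝ) < x := by
    rcases lt_or_eq_of_le (Int.floor_le x) with hlt | heq
    · exact hlt
    · exact absurd heq.symm (hnint ⌊x⌋)
  have hlt1 := Int.lt_floor_add_one x
  have hfl : ⌊(2 - t + 1) / 2⌋ = 1 - ⌊x⌋ := by
    rw [Int.floor_eq_iff]
    constructor
    · push_cast
      rw [hx]
      linarith [hlt1]
    · push_cast
      rw [hx]
      rw [hx] at hflt
      linarith
  rw [hfl, sub_eq_add_neg, zpow_add₀ (by norm_num : (-1:ℝ) ≠ 0), zpow_neg, zpow_one]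
  rcases Int.even_or_odd ⌊x⌋ with he | ho
  · rw [he.neg_one_zpow]; norm_num
  · rw [ho.neg_one_zpow]; norm_num

/-- Characterization of the fibers of Z: Z(a) = Z(b) iff a is obtained from b by
    applying R_{(1,1)} at most once (p ∈ {0,1}) and translating by (4n, 4m, 0). -/
theorem zorich_fibers (a b : EuclideanSpace ℝ (Fin 3)) :
    Z a = Z b ↔
      ∃ n m : ℤ, a = b + vec3 (4 * n) (4 * m) 0 ∨ a = Rot 1 1 b + vec3 (4 * n) (4 * m) 0 := by
  constructor
  · intro hZ
    have hA := Real.exp_pos (a 2)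
    have hB := Real.exp_pos (b 2)
    have e0 : Real.exp (a 2) * h (a 0) = Real.exp (b 2) * h (b 0) := congrArg (fun v => v 0) hZ
    have e1 : Real.exp (a 2) * h (a 1) = Real.exp (b 2) * h (b 1) := congrArg (fun v => v 1) hZ
    have e2 : Real.exp (a 2) * (eps (a 0) * eps (a 1) * (1 - max |h (a 0)| |h (a 1)|))
        = Real.exp (b 2) * (eps (b 0) * eps (b 1) * (1 - max |h (b 0)| |h (b 1)|)) :=
      congrArg (fun v => v 2) hZ
    have hMa : max |h (a 0)| |h (a 1)| ≤ 1 := max_le (abs_h_le _) (abs_h_le _)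
    have hMb : max |h (b 0)| |h (b 1)| ≤ 1 := max_le (abs_h_le _) (abs_h_le _)
    -- absolute value versions
    have A0 : Real.exp (a 2) * |h (a 0)| = Real.exp (b 2) * |h (b 0)| := by
      have := congrArg abs e0
      rwa [abs_mul, abs_mul, Real.abs_exp, Real.abs_exp] at this
    have A1 : Real.exp (a 2) * |h (a 1)| = Real.exp (b 2) * |h (b 1)| := by
      have := congrArg abs e1
      rwa [abs_mul, abs_mul, Real.abs_exp, Real.abs_exp] at this
    have A2 : Real.exp (a 2) * (1 - max |h (a 0)| |h (a 1)|)
        = Real.exp (b 2) * (1 - max |h (b 0)| |h (b 1)|) := by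
      have := congrArg abs e2
      simp only [abs_mul, Real.abs_exp, abs_eps, one_mul] at this
      rwa [abs_of_nonneg (by linarith : (0:ℝ) ≤ 1 - max |h (a 0)| |h (a 1)|),
        abs_of_nonneg (by linarith : (0:ℝ) ≤ 1 - max |h (b 0)| |h (b 1)|)] at this
    -- exp (a 2) = exp (b 2)
    have hEF : Real.exp (a 2) = Real.exp (b 2) := by
      rcases max_cases |h (a 0)| |h (a 1)| with ⟨hma, hma'⟩ | ⟨hma, hma'⟩ <;>
        rcases max_cases |h (b 0)| |h (b 1)| with ⟨hmb, hmb'⟩ | ⟨hmb, hmb'⟩ <;>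
          rw [hma, hmb] at A2
      · linarith
      · linarith [mul_lt_mul_of_pos_left hmb' hB, mul_le_mul_of_nonneg_left hma' hA.le]
      · linarith [mul_lt_mul_of_pos_left hma' hA, mul_le_mul_of_nonneg_left hmb' hB.le]
      · linarith
    have h22 : a 2 = b 2 := Real.exp_eq_exp.mp hEF
    rw [hEF] at e0 e1 e2
    have H0 : h (a 0) = h (b 0) := mul_left_cancel₀ hB.ne' e0
    have H1 : h (a 1) = h (b 1) := mul_left_cancel₀ hB.ne' e1
    have T : eps (a 0) * eps (a 1) * (1 - max |h (b 0)| |h (b 1)|)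
        = eps (b 0) * eps (b 1) * (1 - max |h (b 0)| |h (b 1)|) := by
      have := mul_left_cancel₀ hB.ne' e2
      rwa [congrArg abs H0, congrArg abs H1] at this
    -- helper to build the two kinds of witnesses
    have mkP : ∀ n m : ℤ, a 0 = b 0 + 4 * n → a 1 = b 1 + 4 * m →
        ∃ n m : ℤ, a = b + vec3 (4 * n) (4 * m) 0 ∨ a = Rot 1 1 b + vec3 (4 * n) (4 * m) 0 := by
      intro n m hn hm
      refine ⟨n, m, Or.inl ?_⟩
      ext i
      fin_cases i
      · exact hn
      · exact hm
      · show a 2 = b 2 + 0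
        rw [h22, add_zero]
    have mkR : ∀ n m : ℤ, a 0 = 2 - b 0 + 4 * n → a 1 = 2 - b 1 + 4 * m →
        ∃ n m : ℤ, a = b + vec3 (4 * n) (4 * m) 0 ∨ a = Rot 1 1 b + vec3 (4 * n) (4 * m) 0 := by
      intro n m hn hm
      refine ⟨n, m, Or.inr ?_⟩
      ext i
      fin_cases i
      · show a 0 = 2 * 1 - b 0 + 4 * (n : ℝ)
        rw [hn]; ring
      · show a 1 = 2 * 1 - b 1 + 4 * (m : ℝ)
        rw [hm]; ring
      · show a 2 = b 2 + 0
        rw [h22, add_zero]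
    rcases h_fiber H0 with ⟨k0, hk0⟩ | ⟨k0, hk0⟩ <;> rcases h_fiber H1 with ⟨k1, hk1⟩ | ⟨k1, hk1⟩
    · exact mkP k0 k1 hk0 hk1
    · -- a0 ≡ b0, a1 ≡ 2 - b1
      by_cases hodd1 : ∃ j : ℤ, b 1 = 2 * j - 1
      · obtain ⟨j, hj⟩ := hodd1
        refine mkP k0 (k1 + 1 - j) hk0 ?_
        rw [hk1, hj]; push_cast; ring
      · by_cases hodd0 : ∃ j : ℤ, b 0 = 2 * j - 1
        · obtain ⟨j, hj⟩ := hodd0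
          refine mkR (k0 + j - 1) k1 ?_ hk1
          rw [hk0, hj]; push_cast; ring
        · exfalso
          push_neg at hodd0 hodd1
          have hb0 : |h (b 0)| < 1 :=
            lt_of_le_of_ne (abs_h_le _) (fun hc => absurd (abs_h_one hc) (by push_neg; exact hodd0))
          have hb1 : |h (b 1)| < 1 :=
            lt_of_le_of_ne (abs_h_le _) (fun hc => absurd (abs_h_one hc) (by push_neg; exact hodd1))
          have hMlt : max |h (b 0)| |h (b 1)| < 1 := max_lt hb0 hb1
          have ea0 : eps (a 0) = eps (b 0) := by rw [hk0]; exact eps_add_int _ k0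
          have ea1 : eps (a 1) = -eps (b 1) := by
            rw [hk1, eps_add_int, eps_two_sub hodd1]
          rw [ea0, ea1] at T
          have hc : (1 - max |h (b 0)| |h (b 1)|) ≠ 0 := ne_of_gt (by linarith)
          have T' := mul_right_cancel₀ hc T
          rcases eps_eq (b 0) with hu | hu <;> rcases eps_eq (b 1) with hv | hv <;>
            rw [hu, hv] at T' <;> norm_num at T'
    · -- a0 ≡ 2 - b0, a1 ≡ b1
      by_cases hodd0 : ∃ j : ℤ, b 0 = 2 * j - 1
      · obtain ⟨j, hj⟩ := hodd0
        refine mkP (k0 + 1 - j) k1 ?_ hk1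
        rw [hk0, hj]; push_cast; ring
      · by_cases hodd1 : ∃ j : ℤ, b 1 = 2 * j - 1
        · obtain ⟨j, hj⟩ := hodd1
          refine mkR k0 (k1 + j - 1) hk0 ?_
          rw [hk1, hj]; push_cast; ring
        · exfalso
          push_neg at hodd0 hodd1
          have hb0 : |h (b 0)| < 1 :=
            lt_of_le_of_ne (abs_h_le _) (fun hc => absurd (abs_h_one hc) (by push_neg; exact hodd0))
          have hb1 : |h (b 1)| < 1 :=
            lt_of_le_of_ne (abs_h_le _) (fun hc => absurd (abs_h_one hc) (by push_neg; exact hodd1))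
          have hMlt : max |h (b 0)| |h (b 1)| < 1 := max_lt hb0 hb1
          have ea0 : eps (a 0) = -eps (b 0) := by
            rw [hk0, eps_add_int, eps_two_sub hodd0]
          have ea1 : eps (a 1) = eps (b 1) := by rw [hk1]; exact eps_add_int _ k1
          rw [ea0, ea1] at T
          have hc : (1 - max |h (b 0)| |h (b 1)|) ≠ 0 := ne_of_gt (by linarith)
          have T' := mul_right_cancel₀ hc T
          rcases eps_eq (b 0) with hu | hu <;> rcases eps_eq (b 1) with hv | hv <;>
            rw [hu, hv] at T' <;> norm_num at T'
    · exact mkR k0 k1 hk0 hk1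
  · rintro ⟨n, m, hcase | hcase⟩
    · have h0 : a 0 = b 0 + 4 * (n : ℝ) := congrArg (fun v => v 0) hcase
      have h1 : a 1 = b 1 + 4 * (m : ℝ) := congrArg (fun v => v 1) hcase
      have h2 : a 2 = b 2 + 0 := congrArg (fun v => v 2) hcase
      rw [add_zero] at h2
      ext i
      fin_cases i
      · show Real.exp (a 2) * h (a 0) = Real.exp (b 2) * h (b 0)
        rw [h2, h0, h_add_int]
      · show Real.exp (a 2) * h (a 1) = Real.exp (b 2) * h (b 1)
        rw [h2, h1, h_add_int]
      · show Real.exp (a 2) * (eps (a 0) * eps (a 1) * (1 - max |h (a 0)| |h (a 1)|))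
            = Real.exp (b 2) * (eps (b 0) * eps (b 1) * (1 - max |h (b 0)| |h (b 1)|))
        rw [h2, h0, h1, h_add_int, h_add_int, eps_add_int, eps_add_int]
    · have h0' : a 0 = 2 * 1 - b 0 + 4 * (n : ℝ) := congrArg (fun v => v 0) hcase
      have h1' : a 1 = 2 * 1 - b 1 + 4 * (m : ℝ) := congrArg (fun v => v 1) hcase
      have h2 : a 2 = b 2 + 0 := congrArg (fun v => v 2) hcase
      rw [add_zero] at h2
      have h0 : a 0 = 2 - b 0 + 4 * (n : ℝ) := by rw [h0']; ring
      have h1 : a 1 = 2 - b 1 + 4 * (m : ℝ) := by rw [h1']; ring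
      have H0 : h (a 0) = h (b 0) := by rw [h0, h_add_int, h_two_sub]
      have H1 : h (a 1) = h (b 1) := by rw [h1, h_add_int, h_two_sub]
      ext i
      fin_cases i
      · show Real.exp (a 2) * h (a 0) = Real.exp (b 2) * h (b 0)
        rw [h2, H0]
      · show Real.exp (a 2) * h (a 1) = Real.exp (b 2) * h (b 1)
        rw [h2, H1]
      · show Real.exp (a 2) * (eps (a 0) * eps (a 1) * (1 - max |h (a 0)| |h (a 1)|))
            = Real.exp (b 2) * (eps (b 0) * eps (b 1) * (1 - max |h (b 0)| |h (b 1)|))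
        rw [h2, congrArg abs H0, congrArg abs H1]
        by_cases hodd0 : ∃ j : ℤ, b 0 = 2 * j - 1
        · obtain ⟨j, hj⟩ := hodd0
          have : |h (b 0)| = 1 := by
            rw [hj]
            have : (2 : ℝ) * j - 1 = 2 * (j : ℤ) - 1 := by norm_num
            rw [this]
            exact abs_h_one_of_odd j
          rw [max_eq_left (this ▸ abs_h_le (b 1)), this]
          ring
        · by_cases hodd1 : ∃ j : ℤ, b 1 = 2 * j - 1
          · obtain ⟨j, hj⟩ := hodd1
            have : |h (b 1)| = 1 := by
              rw [hj]
              have : (2 : ℝ) * j - 1 = 2 * (j : ℤ) - 1 := by norm_num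
              rw [this]
              exact abs_h_one_of_odd j
            rw [max_eq_right (this ▸ abs_h_le (b 0)), this]
            ring
          · push_neg at hodd0 hodd1
            have ea0 : eps (a 0) = -eps (b 0) := by
              rw [h0, eps_add_int, eps_two_sub hodd0]
            have ea1 : eps (a 1) = -eps (b 1) := by
              rw [h1, eps_add_int, eps_two_sub hodd1]
            rw [ea0, ea1]
            ring
end

section
/- Let B_Z = {(2n+1, 2m+1, t) : n, m ∈ ℤ, t ∈ ℝ} be the branch set of Z. Then Z(B_Z) ∪ {0} = {t·(1,1,0) : t ∈ ℝ} ∪ {t·(-1,1,0) : t ∈ ℝ}. -/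
/-- The branch set of Z: vertical lines over points with both coordinates odd integers. -/
def branchSet : Set (EuclideanSpace ℝ (Fin 3)) :=
  {x | ∃ n m : ℤ, x 0 = 2 * n + 1 ∧ x 1 = 2 * m + 1}

lemma h_one : h 1 = 1 := by
  have : Int.fract ((1:ℝ)/2) = 1/2 := by rw [Int.fract_eq_self]; norm_num
  norm_num [h, this]

lemma h_neg_one : h (-1) = -1 := by
  norm_num [h, Int.fract_zero]

lemma h_odd (n : ℤ) : h (2*(n:ℝ)+1) = 1 ∨ h (2*(n:ℝ)+1) = -1 := by
  rcases Int.even_or_odd n with ⟨k,hk⟩|⟨k,hk⟩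
  · left
    have e : ((2*(n:ℝ)+1)+1)/4 = (k:ℝ) + 1/2 := by subst hk; push_cast; ring
    have f : Int.fract ((1:ℝ)/2) = 1/2 := by rw [Int.fract_eq_self]; norm_num
    rw [h, e, Int.fract_intCast_add, f]; norm_num
  · right
    have e : ((2*(n:ℝ)+1)+1)/4 = ((k+1 : ℤ):ℝ) := by subst hk; push_cast; ring
    rw [h, e, Int.fract_intCast]; norm_num

lemma Z_branch (x : EuclideanSpace ℝ (Fin 3)) (a b : ℝ) (ha : h (x 0) = a) (hb : h (x 1) = b)
    (ha1 : |a| = 1) (hb1 : |b| = 1) :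
    Z x = Real.exp (x 2) • vec3 a b 0 := by
  have : (1 : ℝ) - max |a| |b| = 0 := by rw [ha1, hb1]; simp
  simp [Z, ha, hb, this]

/-- Z(B_Z) ∪ {0} = {t(1,1,0) : t ∈ ℝ} ∪ {t(-1,1,0) : t ∈ ℝ}. -/
theorem zorich_image_branch_set :
    Z '' branchSet ∪ {0} =
      {y : EuclideanSpace ℝ (Fin 3) | ∃ t : ℝ, y = t • vec3 1 1 0} ∪
        {y : EuclideanSpace ℝ (Fin 3) | ∃ t : ℝ, y = t • vec3 (-1) 1 0} := by
  ext y
  constructor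
  · rintro (⟨x, ⟨n, m, hx0, hx1⟩, rfl⟩ | rfl)
    · have hn := h_odd n
      have hm := h_odd m
      rw [← hx0] at hn
      rw [← hx1] at hm
      rcases hn with ha | ha <;> rcases hm with hb | hb
      · exact Or.inl ⟨Real.exp (x 2), Z_branch x 1 1 ha hb (by norm_num) (by norm_num)⟩
      · refine Or.inr ⟨-Real.exp (x 2), ?_⟩
        rw [Z_branch x 1 (-1) ha hb (by norm_num) (by norm_num)]
        ext i; fin_cases i <;> simp [vec3] <;> ring
      · refine Or.inr ⟨Real.exp (x 2), ?_⟩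
        rw [Z_branch x (-1) 1 ha hb (by norm_num) (by norm_num)]
      · refine Or.inl ⟨-Real.exp (x 2), ?_⟩
        rw [Z_branch x (-1) (-1) ha hb (by norm_num) (by norm_num)]
        ext i; fin_cases i <;> simp [vec3] <;> ring
    · exact Or.inl ⟨0, by simp⟩
  · have mem1 : ∀ u v : ℝ, (∃ n m : ℤ, u = 2*(n:ℝ)+1 ∧ v = 2*(m:ℝ)+1) → ∀ s : ℝ,
        vec3 u v s ∈ branchSet := by
      rintro u v ⟨n, m, hu, hv⟩ s
      exact ⟨n, m, by simp [vec3, hu], by simp [vec3, hv]⟩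
    rintro (⟨t, rfl⟩ | ⟨t, rfl⟩)
    · rcases lt_trichotomy t 0 with ht | rfl | ht
      · refine Or.inl ⟨vec3 (-1) (-1) (Real.log (-t)), mem1 _ _ ⟨-1, -1, by norm_num, by norm_num⟩ _, ?_⟩
        rw [Z_branch _ (-1) (-1) (by simp [vec3, h_neg_one]) (by simp [vec3, h_neg_one])
          (by norm_num) (by norm_num)]
        have : Real.exp ((vec3 (-1) (-1) (Real.log (-t))) 2) = -t := by
          show Real.exp (Real.log (-t)) = -t; exact Real.exp_log (by linarith)
        rw [this]
        ext i; fin_cases i <;> simp [vec3] <;> ring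
      · exact Or.inr (by simp)
      · refine Or.inl ⟨vec3 1 1 (Real.log t), mem1 _ _ ⟨0, 0, by norm_num, by norm_num⟩ _, ?_⟩
        rw [Z_branch _ 1 1 (by simp [vec3, h_one]) (by simp [vec3, h_one])
          (by norm_num) (by norm_num)]
        have : Real.exp ((vec3 1 1 (Real.log t)) 2) = t := by
          show Real.exp (Real.log t) = t; exact Real.exp_log ht
        rw [this]
    · rcases lt_trichotomy t 0 with ht | rfl | ht
      · refine Or.inl ⟨vec3 1 (-1) (Real.log (-t)), mem1 _ _ ⟨0, -1, by norm_num, by norm_num⟩ _, ?_⟩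
        rw [Z_branch _ 1 (-1) (by simp [vec3, h_one]) (by simp [vec3, h_neg_one])
          (by norm_num) (by norm_num)]
        have : Real.exp ((vec3 1 (-1) (Real.log (-t))) 2) = -t := by
          show Real.exp (Real.log (-t)) = -t; exact Real.exp_log (by linarith)
        rw [this]
        ext i; fin_cases i <;> simp [vec3] <;> ring
      · exact Or.inr (by simp)
      · refine Or.inl ⟨vec3 (-1) 1 (Real.log t), mem1 _ _ ⟨-1, 0, by norm_num, by norm_num⟩ _, ?_⟩
        rw [Z_branch _ (-1) 1 (by simp [vec3, h_neg_one]) (by simp [vec3, h_one])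
          (by norm_num) (by norm_num)]
        have : Real.exp ((vec3 (-1) 1 (Real.log t)) 2) = t := by
          show Real.exp (Real.log t) = t; exact Real.exp_log ht
        rw [this]
end

section
/- Oscillating orbits on the invariant ray (Lemma 5.3): let 0 < λ < 1 and let L' ∈ ℝ satisfy L' > 1 and L' ≥ log(1/λ). Suppose f : ℝ³ → ℝ³ satisfies f(t·(1,1,0)) = (1/(2λ·e^{|t|}·t))·(1,1,0) for every real t with |t| > L', and f(t·(1,1,0)) = (1/(2λt))·(1,1,0) for every real t with 0 < |t| < 1. Then for every real t with |t| > L' or 0 < |t| < 1/(2L'), the orbit of x = t·(1,1,0) under f neither stays bounded nor tends to infinity: there exist strictly increasing sequences (n_k) and (m_k) of natural numbers such that f^{n_k}(x) → 0 and ‖f^{m_k}(x)‖ → ∞ as k → ∞. -/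
lemma vec3_norm_pos : 0 < ‖vec3 1 1 0‖ := by
  rw [norm_pos_iff]
  intro h
  have := congrArg (fun v : EuclideanSpace ℝ (Fin 3) => v 0) h
  simp [vec3] at this

lemma orbit_big (lam L' : ℝ) (hlam0 : 0 < lam)
    (hL'1 : 1 < L') (hL'log : Real.log (1 / lam) ≤ L')
    (f : EuclideanSpace ℝ (Fin 3) → EuclideanSpace ℝ (Fin 3))
    (hbig : ∀ t : ℝ, L' < |t| →
      f (t • vec3 1 1 0) = (1 / (2 * lam * Real.exp |t| * t)) • vec3 1 1 0)
    (hsmall : ∀ t : ℝ, 0 < |t| → |t| < 1 →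
      f (t • vec3 1 1 0) = (1 / (2 * lam * t)) • vec3 1 1 0)
    (t : ℝ) (ht : L' < |t|) :
    ∀ k : ℕ, ∃ u : ℝ, f^[2*k] (t • vec3 1 1 0) = u • vec3 1 1 0 ∧
      2^k * L' < |u| ∧
      f^[2*k+1] (t • vec3 1 1 0) = (1/(2*lam*Real.exp |u| * u)) • vec3 1 1 0 := by
  have hexpL : 1/lam ≤ Real.exp L' := by
    calc 1/lam = Real.exp (Real.log (1/lam)) :=
          (Real.exp_log (by positivity)).symm
      _ ≤ Real.exp L' := Real.exp_le_exp.mpr hL'log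
  -- main facts for a big value u
  have step : ∀ u : ℝ, L' < |u| →
      f (u • vec3 1 1 0) = (1/(2*lam*Real.exp |u| * u)) • vec3 1 1 0 ∧
      f (f (u • vec3 1 1 0)) = (Real.exp |u| * u) • vec3 1 1 0 ∧
      2 * |u| ≤ |Real.exp |u| * u| := by
    intro u hu
    have hu0 : u ≠ 0 := by
      intro h; rw [h, abs_zero] at hu; linarith
    have habs : 0 < |u| := abs_pos.mpr hu0
    have hexpu : 1/lam ≤ Real.exp |u| :=
      hexpL.trans (Real.exp_le_exp.mpr hu.le)
    have hle1 : 1 ≤ lam * Real.exp |u| := by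
      rw [mul_comm]; exact (div_le_iff₀ hlam0).mp hexpu
    have hexppos : 0 < Real.exp |u| := Real.exp_pos _
    have hlampos2 : 0 < 2 * lam * Real.exp |u| := by positivity
    have h1 := hbig u hu
    set s := 1/(2*lam*Real.exp |u| * u) with hs
    have hsabs : |s| = 1/(2*lam*Real.exp |u| * |u|) := by
      rw [hs, abs_div, abs_one, abs_mul, abs_of_pos hlampos2]
    have hspos : 0 < |s| := by rw [hsabs]; positivity
    have hbound : 2 * |u| ≤ 2*lam*Real.exp |u| * |u| := by
      nlinarith
    have hslt : |s| < 1 := by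
      rw [hsabs, div_lt_one (by positivity)]
      nlinarith
    have h2 : f (f (u • vec3 1 1 0)) = (Real.exp |u| * u) • vec3 1 1 0 := by
      rw [h1, hsmall s hspos hslt]
      congr 1
      rw [hs]
      field_simp
    refine ⟨h1, h2, ?_⟩
    rw [abs_mul, abs_of_pos hexppos]
    have : (2:ℝ) ≤ Real.exp |u| := by
      have := Real.add_one_le_exp |u|
      linarith
    nlinarith
  -- induction
  intro k
  induction k with
  | zero =>
    refine ⟨t, by simp, by simpa using ht, ?_⟩
    simpa using (step t ht).1
  | succ k ih =>
    obtain ⟨u, heq, hb, _⟩ := ih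
    have huL : L' < |u| := by
      have h1 : (1:ℝ) ≤ 2^k := one_le_pow₀ (by norm_num : (1:ℝ) ≤ 2)
      nlinarith
    obtain ⟨s1, s2, s3⟩ := step u huL
    have heq2 : f^[2*(k+1)] (t • vec3 1 1 0) = (Real.exp |u| * u) • vec3 1 1 0 := by
      have : 2*(k+1) = (2*k)+1+1 := by ring
      rw [this, Function.iterate_succ_apply', Function.iterate_succ_apply', heq, s2]
    have hb2 : 2^(k+1) * L' < |Real.exp |u| * u| := by
      have : 2^(k+1) * L' = 2 * (2^k * L') := by ring
      rw [this]
      calc 2 * (2^k * L') < 2 * |u| := by linarith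
        _ ≤ |Real.exp |u| * u| := s3
    have huL2 : L' < |Real.exp |u| * u| := by
      have h1 : (1:ℝ) ≤ 2^(k+1) := one_le_pow₀ (by norm_num : (1:ℝ) ≤ 2)
      nlinarith
    refine ⟨Real.exp |u| * u, heq2, hb2, ?_⟩
    rw [Function.iterate_succ_apply', heq2]
    exact hbig _ huL2

/-- Oscillating orbits on the invariant ray: if f acts on {t(1,1,0)} like
    M ∘ λF, then for |t| > L' or 0 < |t| < 1/(2L') the orbit of t(1,1,0) has a
    subsequence tending to 0 and a subsequence tending to infinity, so it
    neither stays bounded nor tends to infinity. -/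
theorem oscillating_orbits (lam L' : ℝ) (hlam0 : 0 < lam) (hlam1 : lam < 1)
    (hL'1 : 1 < L') (hL'log : Real.log (1 / lam) ≤ L')
    (f : EuclideanSpace ℝ (Fin 3) → EuclideanSpace ℝ (Fin 3))
    (hbig : ∀ t : ℝ, L' < |t| →
      f (t • vec3 1 1 0) = (1 / (2 * lam * Real.exp |t| * t)) • vec3 1 1 0)
    (hsmall : ∀ t : ℝ, 0 < |t| → |t| < 1 →
      f (t • vec3 1 1 0) = (1 / (2 * lam * t)) • vec3 1 1 0) :
    ∀ t : ℝ, (L' < |t| ∨ (0 < |t| ∧ |t| < 1 / (2 * L'))) →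
      ∃ n m : ℕ → ℕ, StrictMono n ∧ StrictMono m ∧
        Filter.Tendsto (fun k => f^[n k] (t • vec3 1 1 0)) Filter.atTop (nhds 0) ∧
        Filter.Tendsto (fun k => ‖f^[m k] (t • vec3 1 1 0)‖) Filter.atTop Filter.atTop := by
  intro t htcase
  have hexpL : 1/lam ≤ Real.exp L' := by
    calc 1/lam = Real.exp (Real.log (1/lam)) :=
          (Real.exp_log (by positivity)).symm
      _ ≤ Real.exp L' := Real.exp_le_exp.mpr hL'log
  -- reduce to a big starting point t₀ with shift d
  obtain ⟨t₀, d, ht₀, hshift⟩ :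
      ∃ (t₀ : ℝ) (d : ℕ), L' < |t₀| ∧
        ∀ k : ℕ, f^[k + d] (t • vec3 1 1 0) = f^[k] (t₀ • vec3 1 1 0) := by
    rcases htcase with h | ⟨h0, h1⟩
    · exact ⟨t, 0, h, fun k => rfl⟩
    · have hL0 : 0 < L' := by linarith
      have ht1 : |t| < 1 := by
        have : 1/(2*L') < 1 := by
          rw [div_lt_one (by linarith)]; linarith
        linarith
      have hstep := hsmall t h0 ht1
      refine ⟨1/(2*lam*t), 1, ?_, ?_⟩
      · have ht0 : t ≠ 0 := abs_pos.mp h0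
        have habs : |1/(2*lam*t)| = 1/(2*lam*|t|) := by
          rw [abs_div, abs_one, abs_mul, abs_of_pos (by positivity : (0:ℝ) < 2*lam)]
        rw [habs, lt_div_iff₀ (by positivity)]
        have h1' : |t| * (2*L') < 1 := (lt_div_iff₀ (by linarith)).mp h1
        nlinarith [h0, hlam0, hlam1]
      · intro k
        rw [Function.iterate_succ_apply, hstep]
  obtain ⟨u, hu⟩ := Classical.axiomOfChoice
    (orbit_big lam L' hlam0 hL'1 hL'log f hbig hsmall t₀ ht₀)
  have hnorm := vec3_norm_pos
  refine ⟨fun k => 2*k+1+d, fun k => 2*k+d, ?_, ?_, ?_, ?_⟩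
  · intro a b h; simp only; omega
  · intro a b h; simp only; omega
  · -- tendsto 0 along odd indices
    rw [tendsto_zero_iff_norm_tendsto_zero]
    apply squeeze_zero (fun k => norm_nonneg _)
      (g := fun k => (1/2)^k * (1/(2*L') * ‖vec3 1 1 0‖))
    · intro k
      obtain ⟨h1, h2, h3⟩ := hu k
      have : f^[2*k+1+d] (t • vec3 1 1 0)
          = (1/(2*lam*Real.exp |u k| * (u k))) • vec3 1 1 0 := by
        rw [hshift (2*k+1), h3]
      rw [this, norm_smul, Real.norm_eq_abs]
      have huk0 : 0 < |u k| := by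
        have : (0:ℝ) < 2^k * L' := by positivity
        linarith
      have hexppos : 0 < Real.exp |u k| := Real.exp_pos _
      have hle1 : 1 ≤ lam * Real.exp |u k| := by
        have hexpu : 1/lam ≤ Real.exp |u k| := by
          refine hexpL.trans (Real.exp_le_exp.mpr ?_)
          have h1 : (1:ℝ) ≤ 2^k := one_le_pow₀ (by norm_num : (1:ℝ) ≤ 2)
          nlinarith
        rw [mul_comm]; exact (div_le_iff₀ hlam0).mp hexpu
      have habs : |1/(2*lam*Real.exp |u k| * (u k))| = 1/(2*lam*Real.exp |u k| * |u k|) := by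
        rw [abs_div, abs_one, abs_mul, abs_of_pos (by positivity : (0:ℝ) < 2*lam*Real.exp |u k|)]
      rw [habs]
      apply mul_le_mul_of_nonneg_right _ (norm_nonneg _) |>.trans
      · rw [← mul_assoc]
      · -- 1/(2 lam e |u|) ≤ (1/2)^k * (1/(2 L'))
        have hb1 : 2 * (2^k * L') ≤ 2*lam*Real.exp |u k| * |u k| := by nlinarith
        have h2L : (0:ℝ) < 2 * (2^k * L') := by positivity
        calc 1/(2*lam*Real.exp |u k| * |u k|) ≤ 1/(2 * (2^k * L')) :=
              one_div_le_one_div_of_le h2L hb1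
          _ = (1/2)^k * (1/(2*L')) := by
              rw [one_div_pow]
              field_simp
    · have : Filter.Tendsto (fun k : ℕ => (1/2:ℝ)^k) Filter.atTop (nhds 0) :=
        tendsto_pow_atTop_nhds_zero_of_lt_one (by norm_num) (by norm_num)
      simpa using this.mul_const (1/(2*L') * ‖vec3 1 1 0‖)
  · -- tendsto atTop along even indices
    apply Filter.tendsto_atTop_mono
      (f := fun k : ℕ => (2:ℝ)^k * (L' * ‖vec3 1 1 0‖))
    · intro k
      obtain ⟨h1, h2, h3⟩ := hu k
      have : f^[2*k+d] (t • vec3 1 1 0) = (u k) • vec3 1 1 0 := by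
        rw [hshift (2*k), h1]
      rw [this, norm_smul, Real.norm_eq_abs]
      have := mul_le_mul_of_nonneg_right h2.le (norm_nonneg (vec3 1 1 0))
      calc (2:ℝ)^k * (L' * ‖vec3 1 1 0‖) = 2^k * L' * ‖vec3 1 1 0‖ := by ring
        _ ≤ |u k| * ‖vec3 1 1 0‖ := this
    · apply Filter.Tendsto.atTop_mul_const (by positivity)
      exact tendsto_pow_atTop_atTop_of_one_lt (by norm_num)
end
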